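/- With notation as in the WHN decomposition (h an FDH function, h_i its WHN graded pieces for i = 1, …, s+1, each decomposed into rank-one FDH functions h_i^1, …, h_i^{ρ_i}), one has the strict inequality h_i^{ρ_i} ≻ h_{i+1}^1 for i = 1, …, s, where ≻ is the order on torsion-free FDH functions comparing first degree and then (inversely) deficiency. -/

import Mathlib

open Finset

/-- First difference `r(n) = h(n) - h(n-1)`. -/
def dr (h : ℤ → ℤ) (n : ℤ) : ℤ := h n - h (n - 1)

/-- An FDH function: nonnegative, nondecreasing first differences nonnegative,
vanishing for `n ≪ 0`, eventually linear `ρ n + σ` with `ρ ≥ 0`. -/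
def IsFDH (h : ℤ → ℤ) : Prop :=
  (∀ n, 0 ≤ h n) ∧ (∀ n, 0 ≤ dr h n) ∧ (∃ N : ℤ, ∀ n ≤ N, h n = 0) ∧
  (∃ ρ σ : ℤ, 0 ≤ ρ ∧ ∃ N : ℤ, ∀ n ≥ N, h n = ρ * n + σ)

/-- Torsion-free: `r(m) ≥ 1` implies `r(n) ≥ 1` for all `n ≥ m`. -/
def TorsionFree (h : ℤ → ℤ) : Prop := ∀ m n : ℤ, m ≤ n → 1 ≤ dr h m → 1 ≤ dr h n

/-- `ht` is the function `h̃(n) = max_{m ≥ n} (h(m) + (n-m) r(m))`. -/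
def TildeSpec (h ht : ℤ → ℤ) : Prop :=
  ∀ n : ℤ, IsGreatest {v : ℤ | ∃ m : ℤ, n ≤ m ∧ v = h m + (n - m) * dr h m} (ht n)

/-- `t n` is the largest maximizer of `m ↦ h(m) + (n-m) r(m)` over `m ≥ n`,
equal to `⊤` when the set of maximizers is unbounded. -/
def TSpec (h ht : ℤ → ℤ) (t : ℤ → WithTop ℤ) : Prop :=
  ∀ n : ℤ,
    (∀ m : ℤ, n ≤ m → ht n = h m + (n - m) * dr h m → (m : WithTop ℤ) ≤ t n) ∧
    (∀ τ : ℤ, t n = (τ : WithTop ℤ) → n ≤ τ ∧ ht n = h τ + (n - τ) * dr h τ) ∧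
    (t n = ⊤ → ∀ M : ℤ, ∃ m : ℤ, M ≤ m ∧ n ≤ m ∧ ht n = h m + (n - m) * dr h m)

/-- The function gamma^i of the canonical rank-one decomposition. -/
def gam (ν β i n : ℤ) : ℤ := if i ≤ β then max (n - ν + 1) 0 else max (n - ν) 0

/-- The rank-one piece h^i = min(gamma^i, (h - sum_{k<i} gamma^k)_+). -/
noncomputable def rkOnePiece (h : ℤ → ℤ) (ν β i n : ℤ) : ℤ :=
  min (gam ν β i n) (max (h n - ∑ k ∈ Finset.Icc 1 (i - 1), gam ν β k n) 0)

/-- t takes exactly two distinct values. -/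
def TwoValues (t : ℤ → WithTop ℤ) : Prop :=
  ∃ v w : WithTop ℤ, v ≠ w ∧ (∃ n : ℤ, t n = v) ∧ (∃ n : ℤ, t n = w) ∧
    ∀ n : ℤ, t n = v ∨ t n = w

/-- g is a rank-one torsion-free FDH-type function of degree d with deficiency
delta = sum over all of ZZ of ((n + d + 1)_+ - g n), the sum being computed over any
finite interval [M, N] outside of which all terms vanish. -/
def HasDegDef (g : ℤ → ℤ) (d δ : ℤ) : Prop :=
  ∃ M N : ℤ, M ≤ N ∧ (∀ n : ℤ, n < M → g n = 0 ∧ n + d + 1 ≤ 0) ∧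
    (∀ n : ℤ, n > N → g n = n + d + 1) ∧
    δ = ∑ n ∈ Finset.Icc M N, (max (n + d + 1) 0 - g n)

/-- tangent line of `h` at `a`, evaluated at `x` -/
def ll (h : ℤ → ℤ) (a x : ℤ) : ℤ := h a + (x - a) * dr h a

lemma ll_succ_diff (h : ℤ → ℤ) (a x : ℤ) :
    ll h (a + 1) x - ll h a x = (x - a) * (dr h (a + 1) - dr h a) := by
  have e1 : dr h (a + 1) = h (a + 1) - h a := by
    have : a + 1 - 1 = a := by ring
    rw [dr, this]
  simp only [ll, e1]
  ring

lemma ll_self (h : ℤ → ℤ) (a : ℤ) : ll h a a = h a := by simp [ll]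

lemma ll_step (h : ℤ → ℤ) (a x : ℤ) : ll h a (x + 1) = ll h a x + dr h a := by
  simp only [ll]; ring

lemma ht_ge {h ht : ℤ → ℤ} (hT : TildeSpec h ht) {n m : ℤ} (hnm : n ≤ m) :
    ll h m n ≤ ht n := (hT n).2 ⟨m, hnm, rfl⟩

lemma t_fin {h ht : ℤ → ℤ} {t : ℤ → WithTop ℤ} (ht' : TSpec h ht t) {n τ : ℤ}
    (hτ : t n = (τ : WithTop ℤ)) : n ≤ τ ∧ ht n = ll h τ n := (ht' n).2.1 τ hτ

lemma t_lt {h ht : ℤ → ℤ} {t : ℤ → WithTop ℤ} (ht' : TSpec h ht t) {n τ : ℤ}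
    (hτ : t n = (τ : WithTop ℤ)) : n + 1 ≤ τ := by
  obtain ⟨hle, hval⟩ := t_fin ht' hτ
  rcases lt_or_eq_of_le hle with hlt | heq
  · omega
  · exfalso
    subst heq
    have hv2 : ht n = ll h (n + 1) n := by
      have e1 : dr h (n + 1) = h (n + 1) - h n := by
        have : n + 1 - 1 = n := by ring
        rw [dr, this]
      rw [hval]
      simp only [ll, e1]
      ring
    have := (ht' n).1 (n + 1) (by omega) hv2
    rw [hτ] at this
    exact absurd (WithTop.coe_le_coe.mp this) (by omega)

lemma strict_beat {h ht : ℤ → ℤ} {t : ℤ → WithTop ℤ} (hT : TildeSpec h ht)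
    (ht' : TSpec h ht t) {n τ m : ℤ} (hτ : t n = (τ : WithTop ℤ))
    (hnm : n ≤ m) (hm : τ < m) : ll h m n ≤ ht n - 1 := by
  rcases lt_or_eq_of_le (ht_ge hT hnm) with hlt | heq
  · omega
  · exfalso
    have := (ht' n).1 m hnm heq.symm
    rw [hτ] at this
    exact absurd (WithTop.coe_le_coe.mp this) (by omega)

lemma t_le_succ {h ht : ℤ → ℤ} {t : ℤ → WithTop ℤ} (hT : TildeSpec h ht)
    (ht' : TSpec h ht t) (n : ℤ) : t n ≤ t (n + 1) := by
  by_cases hTop : t (n + 1) = ⊤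
  · rw [hTop]; exact le_top
  obtain ⟨τ', hτ'⟩ := WithTop.ne_top_iff_exists.mp hTop
  have hτ' : t (n + 1) = (τ' : WithTop ℤ) := hτ'.symm
  obtain ⟨hn1τ, hval⟩ := t_fin ht' hτ'
  have hτ'2 : n + 2 ≤ τ' := by have := t_lt ht' hτ'; omega
  have CLM : ∀ m : ℤ, n ≤ m → ht n = ll h m n → m ≤ τ' := by
    intro m hnm hmax
    by_contra hm'
    push_neg at hm'
    have hσpos : ∀ j : ℤ, τ' < j → 1 ≤ ht (n + 1) - ll h j (n + 1) := by
      intro j hj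
      have := strict_beat hT ht' hτ' (m := j) (by omega) hj
      omega
    have Inv : ∀ j : ℤ, τ' + 1 ≤ j →
        ht (n + 1) - ll h j (n + 1) ≤ (j - n - 2) * (dr h j - dr h τ') := by
      refine Int.le_induction ?_ ?_
      · have hinc := ll_succ_diff h τ' (n + 1)
        rw [hval]
        nlinarith [hinc]
      · intro j hj IH
        have hσj := hσpos j (by omega)
        have hw : 1 ≤ j - n - 2 := by omega
        have hR : 1 ≤ dr h j - dr h τ' := by
          by_contra hc
          push_neg at hc
          have h0 : dr h j - dr h τ' ≤ 0 := by omega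
          nlinarith [mul_nonpos_of_nonneg_of_nonpos (show (0:ℤ) ≤ j - n - 2 by omega) h0]
        have key : ht (n + 1) - ll h j (n + 1) + 1 ≤ (j - n - 1) * (dr h j - dr h τ') := by
          nlinarith [IH, hR]
        have hinc := ll_succ_diff h j (n + 1)
        nlinarith [key, hinc]
    have hInvm := Inv m (by omega)
    have hσm := hσpos m hm'
    have hRm : 1 ≤ dr h m - dr h τ' := by
      by_contra hc
      push_neg at hc
      have h0 : dr h m - dr h τ' ≤ 0 := by omega
      nlinarith [mul_nonpos_of_nonneg_of_nonpos (show (0:ℤ) ≤ m - n - 2 by omega) h0]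
    have hs1 := ll_step h τ' n
    have hs2 := ll_step h m n
    have hup : ll h τ' n ≤ ht n := ht_ge hT (by omega)
    rw [hmax] at hup
    rw [hval] at hσm
    omega
  by_cases hTopn : t n = ⊤
  · obtain ⟨m, hm1, hm2, hm3⟩ := (ht' n).2.2 hTopn (τ' + 1)
    have := CLM m hm2 (by rw [hm3]; rfl)
    omega
  · obtain ⟨τ, hτ⟩ := WithTop.ne_top_iff_exists.mp hTopn
    have hτ : t n = (τ : WithTop ℤ) := hτ.symm
    obtain ⟨h1, h2⟩ := t_fin ht' hτ
    have := CLM τ h1 h2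
    rw [hτ, hτ']
    exact WithTop.coe_le_coe.mpr this

lemma t_mono {h ht : ℤ → ℤ} {t : ℤ → WithTop ℤ} (hT : TildeSpec h ht)
    (ht' : TSpec h ht t) : Monotone t :=
  monotone_int_of_le_succ (t_le_succ hT ht')

lemma intvl_eq_zero {ρ β x : ℤ} (h1 : 0 ≤ β) (h2 : β < ρ)
    (hlo : 0 ≤ ρ * x + β) (hhi : ρ * (x - 1) + β ≤ -1) : x = 0 := by
  have hρ : 0 < ρ := by omega
  have hx0 : 0 ≤ x := by
    by_contra hc
    push_neg at hc
    have hx : x ≤ -1 := by omega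
    nlinarith [mul_le_mul_of_nonneg_left hx (le_of_lt hρ)]
  have hx1 : x ≤ 0 := by
    by_contra hc
    push_neg at hc
    nlinarith [mul_le_mul_of_nonneg_left (show (0:ℤ) ≤ x - 1 by omega) (le_of_lt hρ)]
  omega

lemma pt_zero {ρ β x : ℤ} (h1 : 0 ≤ β) (h2 : β < ρ) (heq : ρ * x + β = 0) : x = 0 :=
  intvl_eq_zero h1 h2 (by omega) (by nlinarith [heq])

lemma pt_neg {ρ β x : ℤ} (h1 : 0 ≤ β) (h2 : β < ρ) (hle : ρ * x + β ≤ -1) : x ≤ -1 := by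
  by_contra hc
  push_neg at hc
  nlinarith [mul_le_mul_of_nonneg_left (show (0:ℤ) ≤ x by omega) (show (0:ℤ) ≤ ρ by omega)]

lemma gam_sum {ν β ρ n : ℤ} (h1 : 0 ≤ β) (h2 : β < ρ) (hn : ν ≤ n) :
    ∑ k ∈ Finset.Icc 1 (ρ - 1), gam ν β k n = (ρ - 1) * (n - ν) + β := by
  have hcongr : ∀ k ∈ Finset.Icc (1:ℤ) (ρ - 1), gam ν β k n
      = (n - ν) + (if k ≤ β then 1 else 0) := by
    intro k hk
    unfold gam
    split <;> omega
  rw [Finset.sum_congr rfl hcongr, Finset.sum_add_distrib, Finset.sum_const,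
    Finset.sum_ite, Finset.sum_const, Finset.sum_const, smul_zero, add_zero]
  have hfil : Finset.filter (fun k => k ≤ β) (Finset.Icc (1:ℤ) (ρ - 1)) = Finset.Icc 1 β := by
    ext x
    simp only [Finset.mem_filter, Finset.mem_Icc]
    omega
  rw [hfil, Int.card_Icc, Int.card_Icc]
  have e1 : ((ρ - 1 + 1 - 1).toNat : ℤ) = ρ - 1 := by omega
  have e2 : ((β + 1 - 1).toNat : ℤ) = β := by omega
  rw [nsmul_eq_mul, nsmul_eq_mul, e1, e2]
  ring

theorem consecutive_pieces_ordered (h ht : ℤ → ℤ) (t : ℤ → WithTop ℤ)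
    (hF : IsFDH h) (hT : TildeSpec h ht) (ht' : TSpec h ht t)
    (τprev τcur : ℤ) (τnext : WithTop ℤ)
    (hvp : ∃ n : ℤ, t n = (τprev : WithTop ℤ))
    (hvc : ∃ n : ℤ, t n = (τcur : WithTop ℤ))
    (hvn : ∃ n : ℤ, t n = τnext)
    (h01 : τprev < τcur) (h12 : (τcur : WithTop ℤ) < τnext)
    (hc1 : ¬ ∃ n : ℤ, (τprev : WithTop ℤ) < t n ∧ t n < (τcur : WithTop ℤ))
    (hc2 : ¬ ∃ n : ℤ, (τcur : WithTop ℤ) < t n ∧ t n < τnext)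
    (hcur hnxt : ℤ → ℤ)
    (hcur_def : ∀ n : ℤ, hcur n =
      if n ≤ τprev then 0
      else if n ≤ τcur then h n - (h τprev + (n - τprev) * dr h τprev)
      else (h τcur + (n - τcur) * dr h τcur) - (h τprev + (n - τprev) * dr h τprev))
    (hnxt_def : ∀ n : ℤ, hnxt n =
      if n ≤ τcur then 0
      else if (n : WithTop ℤ) ≤ τnext then h n - (h τcur + (n - τcur) * dr h τcur)
      else (h (τnext.untopD 0) + (n - τnext.untopD 0) * dr h (τnext.untopD 0)) -
        (h τcur + (n - τcur) * dr h τcur))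
    (ρc νc βc : ℤ) (hβc : 0 ≤ βc ∧ βc < ρc)
    (hlinc : ∃ N : ℤ, ∀ n ≥ N, hcur n = ρc * (n - νc) + βc)
    (ρn νn βn : ℤ) (hβn : 0 ≤ βn ∧ βn < ρn)
    (hlinn : ∃ N : ℤ, ∀ n ≥ N, hnxt n = ρn * (n - νn) + βn) :
    ∀ d δ d' δ' : ℤ,
      HasDegDef (rkOnePiece hcur νc βc ρc) d δ →
      HasDegDef (rkOnePiece hnxt νn βn 1) d' δ' →
      (d' < d ∨ (d = d' ∧ δ < δ')) := by
  intro d δ d' δ' hD hD'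
  have hβc1 := hβc.1
  have hβc2 := hβc.2
  have hβn1 := hβn.1
  have hβn2 := hβn.2
  obtain ⟨n₁, hn₁⟩ := hvp
  obtain ⟨n₀', hn₀'⟩ := hvc
  have hmono := t_mono hT ht'
  -- the linear form of hcur beyond τcur
  have hEline : ∀ x : ℤ, ll h τcur x - ll h τprev x = ρc * (x - νc) + βc := by
    obtain ⟨Nc, hNc⟩ := hlinc
    have hb1 : τcur + 1 ≤ max (τcur + 1) Nc := le_max_left _ _
    have hb2 : Nc ≤ max (τcur + 1) Nc := le_max_right _ _
    have hA : ll h τcur (max (τcur + 1) Nc) - ll h τprev (max (τcur + 1) Nc)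
        = ρc * ((max (τcur + 1) Nc) - νc) + βc := by
      have h1 := hcur_def (max (τcur + 1) Nc)
      rw [if_neg (by omega), if_neg (by omega)] at h1
      have h2 := hNc (max (τcur + 1) Nc) (by omega)
      simp only [ll]
      linarith [h1, h2]
    have hB : ll h τcur ((max (τcur + 1) Nc) + 1) - ll h τprev ((max (τcur + 1) Nc) + 1)
        = ρc * (((max (τcur + 1) Nc) + 1) - νc) + βc := by
      have h1 := hcur_def ((max (τcur + 1) Nc) + 1)
      rw [if_neg (by omega), if_neg (by omega)] at h1
      have h2 := hNc ((max (τcur + 1) Nc) + 1) (by omega)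
      simp only [ll]
      linarith [h1, h2]
    intro x
    simp only [ll] at hA hB ⊢
    linear_combination hA + (x - (max (τcur + 1) Nc)) * hB - (x - (max (τcur + 1) Nc)) * hA
  -- a = least attainment point of τcur
  have hlb : ∀ z : ℤ, t z = (τcur : WithTop ℤ) → n₁ + 1 ≤ z := by
    intro z hz
    by_contra hc
    push_neg at hc
    have := hmono (show z ≤ n₁ by omega)
    rw [hz, hn₁] at this
    exact absurd (WithTop.coe_le_coe.mp this) (by omega)
  obtain ⟨a, ha, hamin⟩ := Int.exists_least_of_bdd ⟨n₁ + 1, hlb⟩ ⟨n₀', hn₀'⟩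
  have h2' : (τprev : WithTop ℤ) ≤ t (a - 1) := by
    have := hmono (show n₁ ≤ a - 1 by have := hlb a ha; omega)
    rw [hn₁] at this
    exact this
  have h1' : t (a - 1) ≤ (τcur : WithTop ℤ) := by
    have := hmono (show a - 1 ≤ a by omega)
    rw [ha] at this
    exact this
  have h3' : t (a - 1) ≠ (τcur : WithTop ℤ) := by
    intro hh
    have := hamin _ hh
    omega
  have h4 : t (a - 1) = (τprev : WithTop ℤ) := by
    by_contra hne
    exact hc1 ⟨a - 1, lt_of_le_of_ne h2' (Ne.symm hne), lt_of_le_of_ne h1' h3'⟩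
  have hτp : a ≤ τprev := by have := t_lt ht' h4; omega
  have hacur : a + 1 ≤ τcur := t_lt ht' ha
  -- pinning νc = a
  have hEa1 : ρc * (a - 1 - νc) + βc ≤ -1 := by
    have hsb := strict_beat hT ht' h4 (m := τcur) (by omega) h01
    have hhtv := (t_fin ht' h4).2
    have hE := hEline (a - 1)
    linarith [hsb, hhtv, hE]
  have hEa : 0 ≤ ρc * (a - νc) + βc := by
    have hge := ht_ge hT (show a ≤ τprev from hτp)
    have hhtv := (t_fin ht' ha).2
    have hE := hEline a
    linarith [hge, hhtv, hE]
  have hνa : νc = a := by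
    have h5 : a - νc = 0 := intvl_eq_zero hβc1 hβc2 hEa
      (by have : a - νc - 1 = a - 1 - νc := by ring
          rw [this]; exact hEa1)
    omega
  have hνcur : νc + 1 ≤ τcur := by omega
  -- νn ≥ νc + 1
  obtain ⟨Nn, hNn⟩ := hlinn
  have hνn : νc + 1 ≤ νn := by
    have hhta : ht a = ll h τcur a := (t_fin ht' ha).2
    rcases eq_or_ne τnext ⊤ with htop | hfin
    · -- τnext = ⊤
      obtain ⟨ρ, σ, hρ0, Nh, hNh⟩ := hF.2.2.2
      have hFline : ∀ x : ℤ, (ρ * x + σ) - ll h τcur x = ρn * (x - νn) + βn := by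
        have hb1 : Nh ≤ max (max Nh (τcur + 1)) Nn := le_trans (le_max_left _ _) (le_max_left _ _)
        have hb2 : τcur + 1 ≤ max (max Nh (τcur + 1)) Nn :=
          le_trans (le_max_right _ _) (le_max_left _ _)
        have hb3 : Nn ≤ max (max Nh (τcur + 1)) Nn := le_max_right _ _
        have hA : (ρ * (max (max Nh (τcur + 1)) Nn) + σ) - ll h τcur (max (max Nh (τcur + 1)) Nn)
            = ρn * ((max (max Nh (τcur + 1)) Nn) - νn) + βn := by
          have h1 := hnxt_def (max (max Nh (τcur + 1)) Nn)
          rw [if_neg (by omega), if_pos (by rw [htop]; exact le_top)] at h1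
          have h2 := hNn (max (max Nh (τcur + 1)) Nn) (by omega)
          have h3 := hNh (max (max Nh (τcur + 1)) Nn) (by omega)
          simp only [ll]
          linarith [h1, h2, h3]
        have hB : (ρ * ((max (max Nh (τcur + 1)) Nn) + 1) + σ)
            - ll h τcur ((max (max Nh (τcur + 1)) Nn) + 1)
            = ρn * (((max (max Nh (τcur + 1)) Nn) + 1) - νn) + βn := by
          have h1 := hnxt_def ((max (max Nh (τcur + 1)) Nn) + 1)
          rw [if_neg (by omega), if_pos (by rw [htop]; exact le_top)] at h1
          have h2 := hNn ((max (max Nh (τcur + 1)) Nn) + 1) (by omega)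
          have h3 := hNh ((max (max Nh (τcur + 1)) Nn) + 1) (by omega)
          simp only [ll]
          linarith [h1, h2, h3]
        intro x
        simp only [ll] at hA hB ⊢
        linear_combination hA + (x - (max (max Nh (τcur + 1)) Nn)) * hB
          - (x - (max (max Nh (τcur + 1)) Nn)) * hA
      have hb1 : Nh + 1 ≤ max (Nh + 1) (max a (τcur + 1)) := le_max_left _ _
      have hb2 : a ≤ max (Nh + 1) (max a (τcur + 1)) :=
        le_trans (le_max_left _ _) (le_max_right _ _)
      have hb3 : τcur + 1 ≤ max (Nh + 1) (max a (τcur + 1)) :=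
        le_trans (le_max_right _ _) (le_max_right _ _)
      have hdrm : dr h (max (Nh + 1) (max a (τcur + 1))) = ρ := by
        rw [dr, hNh (max (Nh + 1) (max a (τcur + 1))) (by omega),
          hNh ((max (Nh + 1) (max a (τcur + 1))) - 1) (by omega)]
        ring
      have hllm : ll h (max (Nh + 1) (max a (τcur + 1))) a = ρ * a + σ := by
        rw [ll, hdrm, hNh (max (Nh + 1) (max a (τcur + 1))) (by omega)]
        ring
      have hsb := strict_beat hT ht' ha (m := max (Nh + 1) (max a (τcur + 1))) hb2 (by omega)
      rw [hllm, hhta] at hsb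
      have hF2 := hFline a
      have : ρn * (a - νn) + βn ≤ -1 := by linarith [hsb, hF2]
      have := pt_neg hβn1 hβn2 this
      omega
    · -- τnext finite
      obtain ⟨τn, hτn⟩ := WithTop.ne_top_iff_exists.mp hfin
      have hτcn : τcur < τn := by
        rw [← hτn] at h12
        exact_mod_cast h12
      have huntop : τnext.untopD 0 = τn := by rw [← hτn, WithTop.untopD_coe]
      have hFline : ∀ x : ℤ, ll h τn x - ll h τcur x = ρn * (x - νn) + βn := by
        have hb1 : τn + 1 ≤ max (τn + 1) Nn := le_max_left _ _
        have hb2 : Nn ≤ max (τn + 1) Nn := le_max_right _ _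
        have hA : ll h τn (max (τn + 1) Nn) - ll h τcur (max (τn + 1) Nn)
            = ρn * ((max (τn + 1) Nn) - νn) + βn := by
          have h1 := hnxt_def (max (τn + 1) Nn)
          rw [if_neg (by omega), if_neg (by
            rw [← hτn]
            intro hcon
            have := WithTop.coe_le_coe.mp hcon
            omega), huntop] at h1
          have h2 := hNn (max (τn + 1) Nn) (by omega)
          simp only [ll]
          linarith [h1, h2]
        have hB : ll h τn ((max (τn + 1) Nn) + 1) - ll h τcur ((max (τn + 1) Nn) + 1)
            = ρn * (((max (τn + 1) Nn) + 1) - νn) + βn := by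
          have h1 := hnxt_def ((max (τn + 1) Nn) + 1)
          rw [if_neg (by omega), if_neg (by
            rw [← hτn]
            intro hcon
            have := WithTop.coe_le_coe.mp hcon
            omega), huntop] at h1
          have h2 := hNn ((max (τn + 1) Nn) + 1) (by omega)
          simp only [ll]
          linarith [h1, h2]
        intro x
        simp only [ll] at hA hB ⊢
        linear_combination hA + (x - (max (τn + 1) Nn)) * hB - (x - (max (τn + 1) Nn)) * hA
      have hsb := strict_beat hT ht' ha (m := τn) (by omega) hτcn
      rw [hhta] at hsb
      have hF2 := hFline a
      have : ρn * (a - νn) + βn ≤ -1 := by linarith [hsb, hF2]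
      have := pt_neg hβn1 hβn2 this
      omega
  -- the boundary case τprev = τcur - 1 forces νc = τprev
  have hprevcase : τprev = τcur - 1 → νc = τprev := by
    intro hpc
    have hE := hEline τprev
    have hll1 : ll h τprev τprev = h τprev := ll_self h τprev
    have hll2 : ll h τcur τprev = h τprev := by
      rw [ll, dr, hpc]
      ring
    have h0 : ρc * (τprev - νc) + βc = 0 := by linarith [hE, hll1, hll2]
    have := pt_zero hβc1 hβc2 h0
    omega
  -- hcur is given by the linear form for n ≥ τcur - 1 (when n ≥ νc + 1)
  have hE_at : ∀ n : ℤ, τcur - 1 ≤ n → νc + 1 ≤ n → hcur n = ρc * (n - νc) + βc := by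
    intro n hn1 hn2
    rcases lt_trichotomy n τcur with hlt | heq | hgt
    · have hneq : n = τcur - 1 := by omega
      have hτp2 : τprev < τcur - 1 := by
        by_contra hcon
        push_neg at hcon
        have : τprev = τcur - 1 := by omega
        have := hprevcase this
        omega
      have h1 := hcur_def n
      rw [if_neg (by omega), if_pos (by omega)] at h1
      have hll2 : h n = ll h τcur n := by
        rw [ll, dr, hneq]
        ring
      have hE := hEline n
      rw [h1, hll2]
      simp only [ll] at hE ⊢
      linarith [hE]
    · have h1 := hcur_def n
      rw [if_neg (by omega), if_pos (by omega)] at h1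
      have hll2 : h n = ll h τcur n := by rw [heq, ll_self]
      have hE := hEline n
      rw [h1, hll2]
      simp only [ll] at hE ⊢
      linarith [hE]
    · have h1 := hcur_def n
      rw [if_neg (by omega), if_neg (by omega)] at h1
      have hE := hEline n
      rw [h1]
      simp only [ll] at hE
      linarith [hE]
  -- facts about g = rkOnePiece hcur νc βc ρc
  have hgamtop : ∀ n : ℤ, gam νc βc ρc n = max (n - νc) 0 := by
    intro n
    unfold gam
    rw [if_neg (by omega)]
  have hG1 : ∀ n : ℤ, 0 ≤ rkOnePiece hcur νc βc ρc n := by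
    intro n
    unfold rkOnePiece
    exact le_min (show 0 ≤ gam νc βc ρc n by unfold gam; split <;> exact le_max_right _ _) (le_max_right _ _)
  have hG2 : ∀ n : ℤ, rkOnePiece hcur νc βc ρc n ≤ max (n - νc) 0 := by
    intro n
    unfold rkOnePiece
    rw [hgamtop]
    exact min_le_left _ _
  have hG3 : ∀ n : ℤ, τcur - 1 ≤ n → rkOnePiece hcur νc βc ρc n = max (n - νc) 0 := by
    intro n hn
    by_cases hcn : νc + 1 ≤ n
    · unfold rkOnePiece
      rw [hgamtop, gam_sum hβc1 hβc2 (show νc ≤ n by omega), hE_at n hn hcn]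
      have hr : ρc * (n - νc) + βc - ((ρc - 1) * (n - νc) + βc) = n - νc := by ring
      rw [hr]
      omega
    · have hn' : n = νc := by omega
      unfold rkOnePiece
      rw [hgamtop]
      have hm0 : max (n - νc) 0 = 0 := by omega
      rw [hm0]
      exact min_eq_left (le_max_right _ _)
  -- identify d
  obtain ⟨M, N, hMN, hlo, hhi, hδ⟩ := hD
  have hd : d = -νc - 1 := by
    have hb1 : N + 1 ≤ max (N + 1) τcur := le_max_left _ _
    have hb2 : τcur ≤ max (N + 1) τcur := le_max_right _ _
    have h1 := hhi (max (N + 1) τcur) (by omega)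
    have h2 := hG3 (max (N + 1) τcur) (by omega)
    omega
  -- facts about g' = rkOnePiece hnxt νn βn 1
  obtain ⟨e, he0, he1, heβ, hgam'⟩ :
      ∃ e : ℤ, 0 ≤ e ∧ e ≤ 1 ∧ e ≤ βn ∧ ∀ n : ℤ, gam νn βn 1 n = max (n - νn + e) 0 := by
    by_cases hb : (1:ℤ) ≤ βn
    · exact ⟨1, by omega, by omega, hb, fun n => by unfold gam; rw [if_pos hb]⟩
    · refine ⟨0, le_refl _, by omega, by omega, fun n => by
        unfold gam
        rw [if_neg hb, add_zero]⟩
  have hg'expr : ∀ n : ℤ, rkOnePiece hnxt νn βn 1 n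
      = min (max (n - νn + e) 0) (max (hnxt n) 0) := by
    intro n
    unfold rkOnePiece
    rw [hgam']
    have hs0 : ∑ k ∈ Finset.Icc (1:ℤ) (1 - 1), gam νn βn k n = 0 := by
      rw [show (1:ℤ) - 1 = 0 by ring, Finset.Icc_eq_empty (by norm_num), Finset.sum_empty]
    rw [hs0, sub_zero]
  have hG'0 : ∀ n : ℤ, n ≤ τcur → rkOnePiece hnxt νn βn 1 n = 0 := by
    intro n hn
    rw [hg'expr]
    have h0 : hnxt n = 0 := by rw [hnxt_def n, if_pos hn]
    rw [h0]
    have : max (0:ℤ) 0 = 0 := by omega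
    rw [this]
    exact min_eq_right (le_max_right _ _)
  have hG'2 : ∀ n : ℤ, rkOnePiece hnxt νn βn 1 n ≤ max (n - νn + e) 0 := by
    intro n
    rw [hg'expr]
    exact min_le_left _ _
  have hG'3 : ∀ n : ℤ, max Nn (νn + 1) ≤ n → rkOnePiece hnxt νn βn 1 n = n - νn + e := by
    intro n hn
    have hb1 : Nn ≤ n := le_trans (le_max_left _ _) hn
    have hb2 : νn + 1 ≤ n := le_trans (le_max_right _ _) hn
    have hval := hNn n (by omega)
    rw [hg'expr, hval]
    have hge : n - νn + e ≤ ρn * (n - νn) + βn := by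
      nlinarith [mul_nonneg (show (0:ℤ) ≤ ρn - 1 by omega) (show (0:ℤ) ≤ n - νn by omega)]
    generalize hX : ρn * (n - νn) + βn = X at hge
    omega
  obtain ⟨M', N', hMN', hlo', hhi', hδ'⟩ := hD'
  have hd' : d' = -νn - 1 + e := by
    have hb1 : N' + 1 ≤ max (N' + 1) (max Nn (νn + 1)) := le_max_left _ _
    have hb2 : max Nn (νn + 1) ≤ max (N' + 1) (max Nn (νn + 1)) := le_max_right _ _
    have h1 := hhi' (max (N' + 1) (max Nn (νn + 1))) (by omega)
    have h2 := hG'3 (max (N' + 1) (max Nn (νn + 1))) (by omega)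
    omega
  -- final comparison
  by_cases hdlt : d' < d
  · exact Or.inl hdlt
  push_neg at hdlt
  have hee : e = 1 ∧ νn = νc + 1 := by omega
  refine Or.inr ⟨by omega, ?_⟩
  -- δ ≤ sum over [νc+1, τcur-2]
  have hsum1 : δ ≤ ∑ n ∈ Finset.Icc (νc + 1) (τcur - 2), (n - νc) := by
    have hzero : ∀ x ∈ Finset.Icc M N,
        x ∉ Finset.Icc M N ∩ Finset.Icc (νc + 1) (τcur - 2) →
        max (x + d + 1) 0 - rkOnePiece hcur νc βc ρc x = 0 := by
      intro x hx hnx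
      have hx2 : x ∉ Finset.Icc (νc + 1) (τcur - 2) := fun hc =>
        hnx (Finset.mem_inter.mpr ⟨hx, hc⟩)
      rw [Finset.mem_Icc] at hx2
      push_neg at hx2
      by_cases hxs : x ≤ νc
      · have hg2 := hG2 x
        have hg1 := hG1 x
        omega
      · have hx3 : τcur - 1 ≤ x := by omega
        have := hG3 x hx3
        omega
    have heq1 : δ = ∑ n ∈ Finset.Icc M N ∩ Finset.Icc (νc + 1) (τcur - 2),
        (max (n + d + 1) 0 - rkOnePiece hcur νc βc ρc n) := by
      rw [hδ]
      exact (Finset.sum_subset Finset.inter_subset_left hzero).symm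
    rw [heq1]
    calc ∑ n ∈ Finset.Icc M N ∩ Finset.Icc (νc + 1) (τcur - 2),
          (max (n + d + 1) 0 - rkOnePiece hcur νc βc ρc n)
        ≤ ∑ n ∈ Finset.Icc M N ∩ Finset.Icc (νc + 1) (τcur - 2), (n - νc) := by
          refine Finset.sum_le_sum ?_
          intro i hi
          obtain ⟨hiA, hiB⟩ := Finset.mem_inter.mp hi
          rw [Finset.mem_Icc] at hiB
          have hg1 := hG1 i
          omega
      _ ≤ ∑ n ∈ Finset.Icc (νc + 1) (τcur - 2), (n - νc) := by
          refine Finset.sum_le_sum_of_subset_of_nonneg Finset.inter_subset_right ?_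
          intro i hi _
          rw [Finset.mem_Icc] at hi
          omega
  -- δ' ≥ sum over [νc+1, τcur]
  have hsum2 : ∑ n ∈ Finset.Icc (νc + 1) τcur, (n - νc) ≤ δ' := by
    have hsubK : Finset.Icc (νc + 1) τcur ⊆ Finset.Icc M' N' := by
      intro x hx
      rw [Finset.mem_Icc] at hx ⊢
      constructor
      · by_contra hcon
        push_neg at hcon
        have := (hlo' x (by omega)).2
        omega
      · by_contra hcon
        push_neg at hcon
        have hh1 := hhi' x (by omega)
        have hh2 := hG'0 x (by omega)
        omega
    have he1' : ∑ n ∈ Finset.Icc (νc + 1) τcur,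
        (max (n + d' + 1) 0 - rkOnePiece hnxt νn βn 1 n)
        = ∑ n ∈ Finset.Icc (νc + 1) τcur, (n - νc) := by
      refine Finset.sum_congr rfl ?_
      intro i hi
      rw [Finset.mem_Icc] at hi
      have hh2 := hG'0 i (by omega)
      omega
    have he2' : ∑ n ∈ Finset.Icc (νc + 1) τcur,
        (max (n + d' + 1) 0 - rkOnePiece hnxt νn βn 1 n)
        ≤ ∑ n ∈ Finset.Icc M' N', (max (n + d' + 1) 0 - rkOnePiece hnxt νn βn 1 n) := by
      refine Finset.sum_le_sum_of_subset_of_nonneg hsubK ?_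
      intro i _ _
      have := hG'2 i
      omega
    rw [hδ']
    omega
  have hstep : ∑ n ∈ Finset.Icc (νc + 1) (τcur - 2), (n - νc)
      < ∑ n ∈ Finset.Icc (νc + 1) τcur, (n - νc) := by
    refine Finset.sum_lt_sum_of_subset (Finset.Icc_subset_Icc_right (by omega))
      (i := τcur) ?_ ?_ ?_ ?_
    · rw [Finset.mem_Icc]; omega
    · rw [Finset.mem_Icc]; omega
    · omega
    · intro j hj _
      rw [Finset.mem_Icc] at hj
      omega
  omega
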